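/- In a contraction sequence G = G_n, ..., G_1 = K_1 of a graph G, consider a fixed triangle T of G and classify its configuration in each G_k by the number of distinct bags meeting T and the colors of the connecting edges (cases (i)–(vii) as in the classification observation). Then as k decreases, once T is in one of the cases (iii), (iv), (vi), (vii) (at most one black connecting edge among three bags, red edge between two bags, or a single bag), it remains in one of these cases in all subsequent trigraphs G_{k'}, k' < k. -/
import Mathlib


attribute [local instance] Classical.propDecidable

/-- A trigraph on a current vertex set `S ⊆ V` (black edges `E`, red edges `R`) together with,
for each vertex `x`, its bag `B x`: the set of original vertices contracted into `x`. -/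
structure Config (V : Type*) where
  S : Finset V
  E : SimpleGraph V
  R : SimpleGraph V
  B : V → Finset V

/-- Contraction of `u` and `v` into the vertex `u` (playing the role of the new vertex `w`):
`v` is removed; a vertex gets a black edge to the new vertex iff it was black-adjacent to both
`u` and `v`, no edge iff adjacent to neither, and a red edge otherwise; other edges are
unchanged.  The bag of the new vertex is the union of the two old bags. -/
noncomputable def Config.contract {V : Type*} (C : Config V) (u v : V) : Config V where
  S := C.S.erase v
  E := SimpleGraph.fromRel fun a b =>
    if a = u then C.E.Adj u b ∧ C.E.Adj v b
    else if b = u then C.E.Adj u a ∧ C.E.Adj v a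
    else C.E.Adj a b
  R := SimpleGraph.fromRel fun a b =>
    if a = u then ¬(C.E.Adj u b ∧ C.E.Adj v b) ∧
      (C.E.Adj u b ∨ C.R.Adj u b ∨ C.E.Adj v b ∨ C.R.Adj v b)
    else if b = u then ¬(C.E.Adj u a ∧ C.E.Adj v a) ∧
      (C.E.Adj u a ∨ C.R.Adj u a ∨ C.E.Adj v a ∨ C.R.Adj v a)
    else C.R.Adj a b
  B := Function.update C.B u (C.B u ∪ C.B v)

/-- `Reaches G C` means the trigraph-with-bags `C` appears in some contraction sequence of the
graph `G`: it is obtained from `G` (with no red edges and singleton bags) by a sequence of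
contractions. -/
inductive Reaches {V : Type*} [Fintype V] (G : SimpleGraph V) : Config V → Prop
  | init : Reaches G ⟨Finset.univ, G, ⊥, fun x => {x}⟩
  | step (C : Config V) (u v : V) (hu : u ∈ C.S) (hv : v ∈ C.S) (huv : u ≠ v)
      (h : Reaches G C) : Reaches G (C.contract u v)

/-- Case (i): the three triangle vertices lie in three distinct bags whose three connecting
edges are all black. -/
def Case1 {V : Type*} (C : Config V) (a b c : V) : Prop :=
  ∃ x ∈ C.S, ∃ y ∈ C.S, ∃ z ∈ C.S, x ≠ y ∧ y ≠ z ∧ x ≠ z ∧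
    a ∈ C.B x ∧ b ∈ C.B y ∧ c ∈ C.B z ∧
    C.E.Adj x y ∧ C.E.Adj y z ∧ C.E.Adj x z

/-- Case (ii): three distinct bags, exactly two black connecting edges and one red. -/
def Case2 {V : Type*} (C : Config V) (a b c : V) : Prop :=
  ∃ x ∈ C.S, ∃ y ∈ C.S, ∃ z ∈ C.S, x ≠ y ∧ y ≠ z ∧ x ≠ z ∧
    a ∈ C.B x ∧ b ∈ C.B y ∧ c ∈ C.B z ∧
    C.E.Adj x y ∧ C.E.Adj y z ∧ C.R.Adj x z

/-- Case (iii): three distinct bags, exactly one black connecting edge and two red. -/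
def Case3 {V : Type*} (C : Config V) (a b c : V) : Prop :=
  ∃ x ∈ C.S, ∃ y ∈ C.S, ∃ z ∈ C.S, x ≠ y ∧ y ≠ z ∧ x ≠ z ∧
    a ∈ C.B x ∧ b ∈ C.B y ∧ c ∈ C.B z ∧
    C.E.Adj x y ∧ C.R.Adj y z ∧ C.R.Adj x z

/-- Case (iv): three distinct bags, all three connecting edges red. -/
def Case4 {V : Type*} (C : Config V) (a b c : V) : Prop :=
  ∃ x ∈ C.S, ∃ y ∈ C.S, ∃ z ∈ C.S, x ≠ y ∧ y ≠ z ∧ x ≠ z ∧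
    a ∈ C.B x ∧ b ∈ C.B y ∧ c ∈ C.B z ∧
    C.R.Adj x y ∧ C.R.Adj y z ∧ C.R.Adj x z

/-- Case (v): one triangle vertex in a bag `G(x)`, the other two in a bag `G(y)`, with
`{x,y}` a black edge. -/
def Case5 {V : Type*} (C : Config V) (a b c : V) : Prop :=
  ∃ x ∈ C.S, ∃ y ∈ C.S, x ≠ y ∧ C.E.Adj x y ∧
    ((a ∈ C.B x ∧ b ∈ C.B y ∧ c ∈ C.B y) ∨
     (b ∈ C.B x ∧ a ∈ C.B y ∧ c ∈ C.B y) ∨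
     (c ∈ C.B x ∧ a ∈ C.B y ∧ b ∈ C.B y))

/-- Case (vi): one triangle vertex in a bag `G(x)`, the other two in a bag `G(y)`, with
`{x,y}` a red edge. -/
def Case6 {V : Type*} (C : Config V) (a b c : V) : Prop :=
  ∃ x ∈ C.S, ∃ y ∈ C.S, x ≠ y ∧ C.R.Adj x y ∧
    ((a ∈ C.B x ∧ b ∈ C.B y ∧ c ∈ C.B y) ∨
     (b ∈ C.B x ∧ a ∈ C.B y ∧ c ∈ C.B y) ∨
     (c ∈ C.B x ∧ a ∈ C.B y ∧ b ∈ C.B y))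

/-- Case (vii): all three triangle vertices lie in a single bag. -/
def Case7 {V : Type*} (C : Config V) (a b c : V) : Prop :=
  ∃ x ∈ C.S, a ∈ C.B x ∧ b ∈ C.B x ∧ c ∈ C.B x

section Helpers

variable {V : Type*} (C : Config V) (u v : V)

/-- The representative of an old vertex after contracting `u, v` into `u`. -/
noncomputable def rep (u v t : V) : V := if t = v then u else t

lemma rep_eq_self {t : V} (h : t ≠ v) : rep u v t = t := if_neg h

lemma rep_v : rep u v v = u := if_pos rfl

lemma rep_u : rep u v u = u := by unfold rep; split <;> rfl

lemma rep_collision {x y : V} (hxy : x ≠ y) (h : rep u v x = rep u v y) :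
    (x = u ∧ y = v) ∨ (x = v ∧ y = u) := by
  unfold rep at h
  split at h <;> split at h <;> simp_all

lemma contract_S_mem {x : V} (hx : x ∈ C.S) (hu : u ∈ C.S) (huv : u ≠ v) :
    rep u v x ∈ (C.contract u v).S := by
  unfold rep
  simp only [Config.contract, Finset.mem_erase]
  split <;> exact ⟨by assumption, by assumption⟩

lemma contract_B_sub {x : V} : C.B x ⊆ (C.contract u v).B (rep u v x) := by
  unfold rep
  simp only [Config.contract]
  by_cases hx : x = v
  · rw [if_pos hx, Function.update_self, hx]
    exact Finset.subset_union_right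
  · rw [if_neg hx, Function.update_apply]
    by_cases hxu : x = u
    · rw [if_pos hxu, hxu]
      exact Finset.subset_union_left
    · rw [if_neg hxu]

lemma contract_E_adj_of_ne {x y : V} (hx : x ≠ u) (hy : y ≠ u) :
    (C.contract u v).E.Adj x y ↔ C.E.Adj x y := by
  simp only [Config.contract, SimpleGraph.fromRel_adj, if_neg hx, if_neg hy]
  constructor
  · rintro ⟨_, h | h⟩
    · exact h
    · exact h.symm
  · intro h; exact ⟨h.ne, Or.inl h⟩

lemma contract_E_adj_u {y : V} (hy : y ≠ u) :
    (C.contract u v).E.Adj u y ↔ C.E.Adj u y ∧ C.E.Adj v y := by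
  simp only [Config.contract, SimpleGraph.fromRel_adj, if_pos rfl, if_neg hy]
  constructor
  · rintro ⟨_, h | h⟩ <;> exact h
  · intro h; exact ⟨h.1.ne, Or.inl h⟩

lemma contract_R_adj_of_ne {x y : V} (hx : x ≠ u) (hy : y ≠ u) :
    (C.contract u v).R.Adj x y ↔ C.R.Adj x y := by
  simp only [Config.contract, SimpleGraph.fromRel_adj, if_neg hx, if_neg hy]
  constructor
  · rintro ⟨_, h | h⟩
    · exact h
    · exact h.symm
  · intro h; exact ⟨h.ne, Or.inl h⟩

lemma contract_R_adj_u {y : V} (hy : y ≠ u) :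
    (C.contract u v).R.Adj u y ↔ ¬(C.E.Adj u y ∧ C.E.Adj v y) ∧
      (C.E.Adj u y ∨ C.R.Adj u y ∨ C.E.Adj v y ∨ C.R.Adj v y) := by
  simp only [Config.contract, SimpleGraph.fromRel_adj, if_pos rfl, if_neg hy]
  constructor
  · rintro ⟨_, h | h⟩ <;> exact h
  · intro h; exact ⟨Ne.symm hy, Or.inl h⟩

/-- The black and red edge sets stay disjoint along a contraction sequence. -/
lemma Reaches.disj {V : Type*} [Fintype V] {G : SimpleGraph V} {C : Config V}
    (h : Reaches G C) : ∀ p q, C.E.Adj p q → ¬ C.R.Adj p q := by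
  induction h with
  | init => intro p q _ hr; exact hr.elim
  | step D w t hw ht hwt hD ih =>
    intro p q hE hR
    by_cases hp : p = w
    · subst p
      have hq : q ≠ w := fun h => hE.ne (h.symm)
      rw [contract_E_adj_u D w t hq] at hE
      rw [contract_R_adj_u D w t hq] at hR
      exact hR.1 hE
    · by_cases hq : q = w
      · subst q
        have hE' := hE.symm
        have hR' := hR.symm
        rw [contract_E_adj_u D w t hp] at hE'
        rw [contract_R_adj_u D w t hp] at hR'
        exact hR'.1 hE'
      · rw [contract_E_adj_of_ne D w t hp hq] at hE
        rw [contract_R_adj_of_ne D w t hp hq] at hR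
        exact ih p q hE hR

variable {C u v}

/-- A red edge survives contraction (possibly with endpoints merged). -/
lemma red_step (hdisj : ∀ p q, C.E.Adj p q → ¬ C.R.Adj p q)
    {p q : V} (h : C.R.Adj p q) (hne : rep u v p ≠ rep u v q) :
    (C.contract u v).R.Adj (rep u v p) (rep u v q) := by
  by_cases hpv : p = v
  · subst p
    have hqv : q ≠ v := h.ne'
    rw [rep_v, rep_eq_self u v hqv] at hne ⊢
    have hqu : q ≠ u := Ne.symm hne
    rw [contract_R_adj_u C u v hqu]
    refine ⟨fun hc => hdisj _ _ hc.2 h, Or.inr (Or.inr (Or.inr h))⟩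
  · by_cases hqv : q = v
    · subst q
      rw [rep_eq_self u v hpv, rep_v] at hne ⊢
      have hpu : p ≠ u := hne
      exact ((contract_R_adj_u C u v hpu).2
        ⟨fun hc => hdisj _ _ hc.2 h.symm, Or.inr (Or.inr (Or.inr h.symm))⟩).symm
    · rw [rep_eq_self u v hpv, rep_eq_self u v hqv] at hne ⊢
      by_cases hpu : p = u
      · subst p
        rw [contract_R_adj_u C u v (Ne.symm hne)]
        exact ⟨fun hc => hdisj _ _ hc.1 h, Or.inr (Or.inl h)⟩
      · by_cases hqu : q = u
        · subst q
          exact ((contract_R_adj_u C u v hpu).2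
            ⟨fun hc => hdisj _ _ hc.1 h.symm, Or.inr (Or.inl h.symm)⟩).symm
        · exact (contract_R_adj_of_ne C u v hpu hqu).2 h

/-- A black edge survives contraction as a black or red edge. -/
lemma black_step {p q : V} (h : C.E.Adj p q) (hne : rep u v p ≠ rep u v q) :
    (C.contract u v).E.Adj (rep u v p) (rep u v q) ∨
      (C.contract u v).R.Adj (rep u v p) (rep u v q) := by
  by_cases hpv : p = v
  · subst p
    have hqv : q ≠ v := h.ne'
    rw [rep_v, rep_eq_self u v hqv] at hne ⊢
    have hqu : q ≠ u := Ne.symm hne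
    by_cases hEu : C.E.Adj u q
    · exact Or.inl ((contract_E_adj_u C u v hqu).2 ⟨hEu, h⟩)
    · exact Or.inr ((contract_R_adj_u C u v hqu).2
        ⟨fun hc => hEu hc.1, Or.inr (Or.inr (Or.inl h))⟩)
  · by_cases hqv : q = v
    · subst q
      rw [rep_eq_self u v hpv, rep_v] at hne ⊢
      have hpu : p ≠ u := hne
      by_cases hEu : C.E.Adj u p
      · exact Or.inl ((contract_E_adj_u C u v hpu).2 ⟨hEu, h.symm⟩).symm
      · exact Or.inr ((contract_R_adj_u C u v hpu).2
          ⟨fun hc => hEu hc.1, Or.inr (Or.inr (Or.inl h.symm))⟩).symm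
    · rw [rep_eq_self u v hpv, rep_eq_self u v hqv] at hne ⊢
      by_cases hpu : p = u
      · subst p
        by_cases hEv : C.E.Adj v q
        · exact Or.inl ((contract_E_adj_u C u v (Ne.symm hne)).2 ⟨h, hEv⟩)
        · exact Or.inr ((contract_R_adj_u C u v (Ne.symm hne)).2
            ⟨fun hc => hEv hc.2, Or.inl h⟩)
      · by_cases hqu : q = u
        · subst q
          by_cases hEv : C.E.Adj v p
          · exact Or.inl ((contract_E_adj_u C u v hpu).2 ⟨h.symm, hEv⟩).symm
          · exact Or.inr ((contract_R_adj_u C u v hpu).2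
              ⟨fun hc => hEv hc.2, Or.inl h.symm⟩).symm
        · exact Or.inl ((contract_E_adj_of_ne C u v hpu hqu).2 h)


/-- When two witness bags `p, q` are merged (necessarily `{p,q} = {u,v}`), a red edge from
`p` to a third vertex `r` becomes a red edge from the merged vertex `u` to `r`. -/
lemma merge_red (hdisj : ∀ p q, C.E.Adj p q → ¬ C.R.Adj p q)
    {p q r : V} (hpq : p ≠ q) (hrp : r ≠ p) (hrq : r ≠ q)
    (hcol : rep u v p = rep u v q) (hR : C.R.Adj p r) :
    (C.contract u v).R.Adj u r ∧ r ≠ u ∧ rep u v r = r ∧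
      rep u v p = u ∧ rep u v q = u := by
  rcases rep_collision u v hpq hcol with ⟨h1, h2⟩ | ⟨h1, h2⟩
  · subst p; subst q
    have hru : r ≠ u := hrp
    have hrr : rep u v r = r := rep_eq_self u v hrq
    refine ⟨?_, hru, hrr, rep_u u v, rep_v u v⟩
    have := red_step hdisj hR (by rw [rep_u, hrr]; exact Ne.symm hru)
    rwa [rep_u, hrr] at this
  · subst p; subst q
    have hru : r ≠ u := hrq
    have hrr : rep u v r = r := rep_eq_self u v hrp
    refine ⟨?_, hru, hrr, rep_v u v, rep_u u v⟩
    have := red_step hdisj hR (by rw [rep_v, hrr]; exact Ne.symm hru)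
    rwa [rep_v, hrr] at this

end Helpers

/-- Once a triangle of `G` is in one of the starred cases (iii), (iv), (vi), (vii) in a
trigraph of a contraction sequence, it remains in one of these cases after any further
contraction step. -/
theorem star_cases_closed {V : Type*} [Fintype V] (G : SimpleGraph V) (C : Config V)
    (h : Reaches G C) (u v : V) (hu : u ∈ C.S) (hv : v ∈ C.S) (huv : u ≠ v)
    (a b c : V) (hab : G.Adj a b) (hbc : G.Adj b c) (hac : G.Adj a c)
    (hstar : Case3 C a b c ∨ Case4 C a b c ∨ Case6 C a b c ∨ Case7 C a b c) :
    Case3 (C.contract u v) a b c ∨ Case4 (C.contract u v) a b c ∨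
      Case6 (C.contract u v) a b c ∨ Case7 (C.contract u v) a b c := by
  have hdisj : ∀ p q, C.E.Adj p q → ¬ C.R.Adj p q := Reaches.disj h
  have hS : ∀ x ∈ C.S, rep u v x ∈ (C.contract u v).S :=
    fun x hx => contract_S_mem C u v hx hu huv
  have hB : ∀ t : V, C.B t ⊆ (C.contract u v).B (rep u v t) :=
    fun t => contract_B_sub C u v
  have huS : u ∈ (C.contract u v).S := by
    have := hS u hu; rwa [rep_u] at this
  unfold Case3 Case4 Case6 Case7 at hstar ⊢
  rcases hstar with ⟨x,hx,y,hy,z,hz,hxy,hyz,hxz,ha,hb,hc,hExy,hRyz,hRxz⟩ |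
      ⟨x,hx,y,hy,z,hz,hxy,hyz,hxz,ha,hb,hc,hRxy,hRyz,hRxz⟩ |
      ⟨x,hx,y,hy,hxy,hRxy,hsplit⟩ | ⟨x,hx,ha,hb,hc⟩
  · -- Case3
    by_cases e1 : rep u v x = rep u v y
    · obtain ⟨hred, hzu, hrz, hpx, hqy⟩ :=
        merge_red hdisj hxy (Ne.symm hxz) (Ne.symm hyz) e1 hRxz
      refine Or.inr (Or.inr (Or.inl ⟨z, ?_, u, huS, hzu, hred.symm,
        Or.inr (Or.inr ⟨?_, ?_, ?_⟩)⟩))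
      · have := hS z hz; rwa [hrz] at this
      · have := hB z hc; rwa [hrz] at this
      · have := hB x ha; rwa [hpx] at this
      · have := hB y hb; rwa [hqy] at this
    · by_cases e2 : rep u v y = rep u v z
      · obtain ⟨hred, hxu, hrx, hpz, hqy⟩ :=
          merge_red hdisj (Ne.symm hyz) hxz hxy e2.symm hRxz.symm
        refine Or.inr (Or.inr (Or.inl ⟨x, ?_, u, huS, hxu, hred.symm,
          Or.inl ⟨?_, ?_, ?_⟩⟩))
        · have := hS x hx; rwa [hrx] at this
        · have := hB x ha; rwa [hrx] at this
        · have := hB y hb; rwa [hqy] at this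
        · have := hB z hc; rwa [hpz] at this
      · by_cases e3 : rep u v x = rep u v z
        · obtain ⟨hred, hyu, hry, hpz, hqx⟩ :=
            merge_red hdisj (Ne.symm hxz) hyz (Ne.symm hxy) e3.symm hRyz.symm
          refine Or.inr (Or.inr (Or.inl ⟨y, ?_, u, huS, hyu, hred.symm,
            Or.inr (Or.inl ⟨?_, ?_, ?_⟩)⟩))
          · have := hS y hy; rwa [hry] at this
          · have := hB y hb; rwa [hry] at this
          · have := hB x ha; rwa [hqx] at this
          · have := hB z hc; rwa [hpz] at this
        · have hr2 := red_step hdisj hRyz e2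
          have hr3 := red_step hdisj hRxz e3
          rcases black_step hExy e1 with hb1 | hb1
          · exact Or.inl ⟨_, hS x hx, _, hS y hy, _, hS z hz, e1, e2, e3,
              hB x ha, hB y hb, hB z hc, hb1, hr2, hr3⟩
          · exact Or.inr (Or.inl ⟨_, hS x hx, _, hS y hy, _, hS z hz, e1, e2, e3,
              hB x ha, hB y hb, hB z hc, hb1, hr2, hr3⟩)
  · -- Case4
    by_cases e1 : rep u v x = rep u v y
    · obtain ⟨hred, hzu, hrz, hpx, hqy⟩ :=
        merge_red hdisj hxy (Ne.symm hxz) (Ne.symm hyz) e1 hRxz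
      refine Or.inr (Or.inr (Or.inl ⟨z, ?_, u, huS, hzu, hred.symm,
        Or.inr (Or.inr ⟨?_, ?_, ?_⟩)⟩))
      · have := hS z hz; rwa [hrz] at this
      · have := hB z hc; rwa [hrz] at this
      · have := hB x ha; rwa [hpx] at this
      · have := hB y hb; rwa [hqy] at this
    · by_cases e2 : rep u v y = rep u v z
      · obtain ⟨hred, hxu, hrx, hpz, hqy⟩ :=
          merge_red hdisj (Ne.symm hyz) hxz hxy e2.symm hRxz.symm
        refine Or.inr (Or.inr (Or.inl ⟨x, ?_, u, huS, hxu, hred.symm,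
          Or.inl ⟨?_, ?_, ?_⟩⟩))
        · have := hS x hx; rwa [hrx] at this
        · have := hB x ha; rwa [hrx] at this
        · have := hB y hb; rwa [hqy] at this
        · have := hB z hc; rwa [hpz] at this
      · by_cases e3 : rep u v x = rep u v z
        · obtain ⟨hred, hyu, hry, hpz, hqx⟩ :=
            merge_red hdisj (Ne.symm hxz) hyz (Ne.symm hxy) e3.symm hRyz.symm
          refine Or.inr (Or.inr (Or.inl ⟨y, ?_, u, huS, hyu, hred.symm,
            Or.inr (Or.inl ⟨?_, ?_, ?_⟩)⟩))
          · have := hS y hy; rwa [hry] at this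
          · have := hB y hb; rwa [hry] at this
          · have := hB x ha; rwa [hqx] at this
          · have := hB z hc; rwa [hpz] at this
        · have hr1 := red_step hdisj hRxy e1
          have hr2 := red_step hdisj hRyz e2
          have hr3 := red_step hdisj hRxz e3
          exact Or.inr (Or.inl ⟨_, hS x hx, _, hS y hy, _, hS z hz, e1, e2, e3,
            hB x ha, hB y hb, hB z hc, hr1, hr2, hr3⟩)
  · -- Case6
    by_cases e : rep u v x = rep u v y
    · have hxu : rep u v x = u := by
        rcases rep_collision u v hxy e with ⟨h1, h2⟩ | ⟨h1, h2⟩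
        · rw [h1]; exact rep_u u v
        · rw [h1]; exact rep_v u v
      have hyu : rep u v y = u := e ▸ hxu
      have hBx : C.B x ⊆ (C.contract u v).B u := by
        have := hB x; rwa [hxu] at this
      have hBy : C.B y ⊆ (C.contract u v).B u := by
        have := hB y; rwa [hyu] at this
      rcases hsplit with ⟨h1, h2, h3⟩ | ⟨h1, h2, h3⟩ | ⟨h1, h2, h3⟩
      · exact Or.inr (Or.inr (Or.inr ⟨u, huS, hBx h1, hBy h2, hBy h3⟩))
      · exact Or.inr (Or.inr (Or.inr ⟨u, huS, hBy h2, hBx h1, hBy h3⟩))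
      · exact Or.inr (Or.inr (Or.inr ⟨u, huS, hBy h2, hBy h3, hBx h1⟩))
    · have hred := red_step hdisj hRxy e
      refine Or.inr (Or.inr (Or.inl ⟨_, hS x hx, _, hS y hy, e, hred, ?_⟩))
      rcases hsplit with ⟨h1, h2, h3⟩ | ⟨h1, h2, h3⟩ | ⟨h1, h2, h3⟩
      · exact Or.inl ⟨hB x h1, hB y h2, hB y h3⟩
      · exact Or.inr (Or.inl ⟨hB x h1, hB y h2, hB y h3⟩)
      · exact Or.inr (Or.inr ⟨hB x h1, hB y h2, hB y h3⟩)
  · -- Case7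
    exact Or.inr (Or.inr (Or.inr ⟨_, hS x hx, hB x ha, hB x hb, hB x hc⟩))
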